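/- Probability that a dyadic cube is good: fix $0<\gamma<1$ and an integer $r > \gamma^{-1}$. For the random dyadic grids $\mathcal D^\omega$ with $\omega$ distributed according to the uniform product measure on $(\{0,1\}^d)^{\mathbb Z}$, the probability that a fixed cube $Q \in \mathcal D_k^\omega$ is $r$-good is at least $1 - C_d \gamma^{-1} 2^{-\gamma r}$ for a constant $C_d$ depending only on $d$. -/

import Mathlib

open MeasureTheory Set
open scoped ENNReal

noncomputable section

/-- A cube `Q ∈ 𝒟_k^ω` (of side length `2^{-k}`) is `r`-bad if there are `s ≥ r`
and a coordinate in which the shift vectors `ω_{k+⌊(1-γ)s⌋}, …, ω_{k+s}` all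
agree. -/
def isBad (d : ℕ) (γ : ℝ) (r : ℕ) (ω : ℤ → Fin d → Bool) (k : ℤ) : Prop :=
  ∃ s : ℕ, r ≤ s ∧ ∃ i : Fin d,
    ∀ j₁ ∈ Set.Icc (k + ⌊(1 - γ) * (s : ℝ)⌋) (k + (s : ℤ)),
      ∀ j₂ ∈ Set.Icc (k + ⌊(1 - γ) * (s : ℝ)⌋) (k + (s : ℤ)),
        ω j₁ i = ω j₂ i

/-- A measure on `(\{0,1\}^d)^ℤ` is the uniform product measure iff every
finite cylinder `{ω : ω_j = a_j, j ∈ J}` has measure `(2^d)^{-|J|}`. -/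
def IsUniformProduct (d : ℕ) (μ : Measure (ℤ → Fin d → Bool)) : Prop :=
  ∀ (J : Finset ℤ) (a : ℤ → Fin d → Bool),
    μ {ω | ∀ j ∈ J, ω j = a j} = ((2 : ℝ≥0∞) ^ d)⁻¹ ^ J.card

/-- The random shift `∑_{j : 2^{-j} < ℓQ} 2^{-j} ω_j`, in coordinate `i`,
for a dyadic cube of side length `2^{-k}`. -/
def shiftVal (d : ℕ) (ω : ℤ → Fin d → Bool) (k : ℤ) (i : Fin d) : ℝ :=
  ∑' j : ℤ, if k < j then (2 : ℝ) ^ (-j) * (cond (ω j i) 1 0) else 0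

/-- The cube of the shifted dyadic grid `𝒟^ω` at scale `2^{-k}` with index `m`. -/
def sdSet (d : ℕ) (ω : ℤ → Fin d → Bool) (k : ℤ) (m : Fin d → ℤ) :
    Set (Fin d → ℝ) :=
  {x | ∀ i, (m i : ℝ) * 2 ^ (-k) + shiftVal d ω k i ≤ x i ∧
      x i < ((m i : ℝ) + 1) * 2 ^ (-k) + shiftVal d ω k i}

/-- Index of the shifted dyadic cube of scale `2^{-k}` containing `x`. -/
def sIdx (d : ℕ) (ω : ℤ → Fin d → Bool) (k : ℤ) (x : Fin d → ℝ) : Fin d → ℤ :=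
  fun i => ⌊(x i - shiftVal d ω k i) / 2 ^ (-k)⌋

/-- Conditional expectation of `f` at scale `2^{-k}` for the grid `𝒟^ω`. -/
def sEk (d : ℕ) (ω : ℤ → Fin d → Bool) (k : ℤ) (f : (Fin d → ℝ) → ℝ)
    (x : Fin d → ℝ) : ℝ :=
  (volume (sdSet d ω k (sIdx d ω k x))).toReal⁻¹ *
    ∫ y in sdSet d ω k (sIdx d ω k x), f y

/-- Martingale difference at scale `2^{-k}`: `D_k f = E_{k+1} f - E_k f`
(the sum of the Haar differences `Δ_Q f` over `Q ∈ 𝒟^ω_k`). -/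
def sDk (d : ℕ) (ω : ℤ → Fin d → Bool) (k : ℤ) (f : (Fin d → ℝ) → ℝ)
    (x : Fin d → ℝ) : ℝ :=
  sEk d ω (k + 1) f x - sEk d ω k f x

/-- The bad projection `P^{bad}_ω f = ∑_{Q bad} Δ_Q f` (badness of a cube in
`𝒟^ω_k` depends only on the scale `k` and on `ω`). -/
def Pbad (d : ℕ) (γ : ℝ) (r : ℕ) (ω : ℤ → Fin d → Bool)
    (f : (Fin d → ℝ) → ℝ) (x : Fin d → ℝ) : ℝ :=
  ∑' k : ℤ, Set.indicator {k' : ℤ | isBad d γ r ω k'} (fun k' => sDk d ω k' f x) k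

/-- The good projection `P^{good}_ω f = ∑_{Q good} Δ_Q f`. -/
def Pgood (d : ℕ) (γ : ℝ) (r : ℕ) (ω : ℤ → Fin d → Bool)
    (f : (Fin d → ℝ) → ℝ) (x : Fin d → ℝ) : ℝ :=
  ∑' k : ℤ, Set.indicator {k' : ℤ | ¬ isBad d γ r ω k'} (fun k' => sDk d ω k' f x) k

lemma cyl_bound (d : ℕ) (μ : Measure (ℤ → Fin d → Bool)) (h : IsUniformProduct d μ)
    (J : Finset ℤ) (i : Fin d) (c : Bool) :
    μ {ω | ∀ j ∈ J, ω j i = c} ≤ (2 : ℝ≥0∞)⁻¹ ^ J.card := by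
  classical
  have hd : 0 < d := i.pos
  set n := J.card with hn
  set S : Finset ({x // x ∈ J} → Fin d → Bool) :=
    Finset.univ.filter (fun g => ∀ b, g b i = c) with hS
  set ext : ({x // x ∈ J} → Fin d → Bool) → ℤ → Fin d → Bool :=
    fun g j => if h' : j ∈ J then g ⟨j, h'⟩ else fun _ => false with hext
  have hsub : {ω : ℤ → Fin d → Bool | ∀ j ∈ J, ω j i = c} ⊆
      ⋃ g ∈ S, {ω | ∀ j ∈ J, ω j = ext g j} := by
    intro ω hω
    have h1 : (fun b : {x // x ∈ J} => ω b.1) ∈ S := by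
      simp only [hS, Finset.mem_filter, Finset.mem_univ, true_and]
      exact fun b => hω b.1 b.2
    have h2 : ω ∈ {ω' : ℤ → Fin d → Bool |
        ∀ j ∈ J, ω' j = ext (fun b : {x // x ∈ J} => ω b.1) j} := by
      intro j hj; simp [hext, hj]
    exact Set.mem_biUnion h1 h2
  have hcard : S.card ≤ (2 ^ (d - 1)) ^ n := by
    have : S.card ≤ Fintype.card ({x // x ∈ J} → {x : Fin d // x ≠ i} → Bool) := by
      rw [← Finset.card_univ]
      apply Finset.card_le_card_of_injOn (fun g b x => g b x.1)
      · intro g _; exact Finset.mem_univ _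
      · intro g hg g' hg' hgg'
        simp only [hS, Finset.coe_filter, Set.mem_setOf_eq] at hg hg'
        funext b x
        by_cases hx : x = i
        · rw [hx, hg.2 b, hg'.2 b]
        · exact congrFun (congrFun hgg' b) ⟨x, hx⟩
    refine this.trans ?_
    rw [Fintype.card_fun, Fintype.card_fun, Fintype.card_bool,
      Fintype.card_subtype_compl, Fintype.card_subtype_eq, Fintype.card_fin,
      Fintype.card_coe]
  have h2top : (2 : ℝ≥0∞) ^ (d - 1) ≠ ⊤ := ENNReal.pow_ne_top (by norm_num)
  have h2z : (2 : ℝ≥0∞) ^ (d - 1) ≠ 0 := by positivity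
  have key : ((2 : ℝ≥0∞) ^ (d - 1)) * ((2 : ℝ≥0∞) ^ d)⁻¹ = 2⁻¹ := by
    have h2 : (2 : ℝ≥0∞) ^ d = 2 ^ (d - 1) * 2 := by
      rw [← pow_succ, Nat.sub_add_cancel hd]
    rw [h2, ENNReal.mul_inv (Or.inl h2z) (Or.inl h2top), ← mul_assoc,
      ENNReal.mul_inv_cancel h2z h2top, one_mul]
  calc μ {ω | ∀ j ∈ J, ω j i = c}
      ≤ ∑ g ∈ S, μ {ω | ∀ j ∈ J, ω j = ext g j} :=
        (measure_mono hsub).trans (measure_biUnion_finset_le S _)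
    _ = S.card * ((2 : ℝ≥0∞) ^ d)⁻¹ ^ n := by
        rw [Finset.sum_congr rfl (fun g _ => h J (ext g)), Finset.sum_const, nsmul_eq_mul]
    _ ≤ (((2 ^ (d - 1)) ^ n : ℕ) : ℝ≥0∞) * ((2 : ℝ≥0∞) ^ d)⁻¹ ^ n := by
        gcongr
    _ = (2 : ℝ≥0∞)⁻¹ ^ n := by push_cast; rw [← mul_pow, key]

lemma floor_le_s (γ : ℝ) (hγ0 : 0 < γ) (s : ℕ) : ⌊(1 - γ) * (s : ℝ)⌋ ≤ (s : ℤ) := by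
  calc ⌊(1 - γ) * (s : ℝ)⌋ ≤ ⌊(s : ℝ)⌋ :=
        Int.floor_le_floor (by nlinarith [Nat.cast_nonneg (α := ℝ) s])
    _ = (s : ℤ) := Int.floor_natCast s

lemma bad_subset (d : ℕ) (γ : ℝ) (hγ0 : 0 < γ) (r : ℕ) (k : ℤ) :
    {ω : ℤ → Fin d → Bool | isBad d γ r ω k} ⊆
      ⋃ (p : ℕ × Fin d × Bool),
        {ω | ∀ j ∈ Finset.Icc (k + ⌊(1 - γ) * ((r + p.1 : ℕ) : ℝ)⌋) (k + ((r + p.1 : ℕ) : ℤ)),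
          ω j p.2.1 = p.2.2} := by
  intro ω hω
  obtain ⟨s, hrs, i, hagree⟩ := hω
  have hmem : k + ⌊(1 - γ) * (s : ℝ)⌋ ∈
      Set.Icc (k + ⌊(1 - γ) * (s : ℝ)⌋) (k + (s : ℤ)) :=
    ⟨le_refl _, by have := floor_le_s γ hγ0 s; omega⟩
  refine Set.mem_iUnion.2 ⟨⟨s - r, i, ω (k + ⌊(1 - γ) * (s : ℝ)⌋) i⟩, ?_⟩
  have hsr : r + (s - r) = s := Nat.add_sub_cancel' hrs
  simp only [hsr]
  intro j hj
  exact hagree j (by simpa [Set.mem_Icc] using Finset.mem_Icc.1 hj) _ hmem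

lemma piece_bound (d : ℕ) (μ : Measure (ℤ → Fin d → Bool)) (h : IsUniformProduct d μ)
    (γ : ℝ) (hγ0 : 0 < γ) (hγ1 : γ < 1)
    (hcyl : ∀ (J : Finset ℤ) (i : Fin d) (c : Bool),
      μ {ω | ∀ j ∈ J, ω j i = c} ≤ (2 : ℝ≥0∞)⁻¹ ^ J.card)
    (s : ℕ) (k : ℤ) (i : Fin d) (c : Bool) :
    μ {ω | ∀ j ∈ Finset.Icc (k + ⌊(1 - γ) * (s : ℝ)⌋) (k + (s : ℤ)), ω j i = c} ≤
      (2 : ℝ≥0∞) ^ (-(γ * s + 1) : ℝ) := by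
  refine (hcyl _ i c).trans ?_
  set n := (Finset.Icc (k + ⌊(1 - γ) * (s : ℝ)⌋) (k + (s : ℤ))).card with hn
  have hfl : ⌊(1 - γ) * (s : ℝ)⌋ ≤ (s : ℤ) := floor_le_s γ hγ0 s
  have hnz : (n : ℤ) = (s : ℤ) + 1 - ⌊(1 - γ) * (s : ℝ)⌋ := by
    rw [hn, Int.card_Icc]
    rw [Int.toNat_of_nonneg (by omega)]
    ring
  have hnr : γ * s + 1 ≤ (n : ℝ) := by
    have h1 : (⌊(1 - γ) * (s : ℝ)⌋ : ℝ) ≤ (1 - γ) * s := Int.floor_le _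
    have h2 : (n : ℝ) = (s : ℝ) + 1 - (⌊(1 - γ) * (s : ℝ)⌋ : ℝ) := by
      exact_mod_cast congrArg (fun z : ℤ => (z : ℝ)) hnz
    nlinarith
  have heq : ((2 : ℝ≥0∞))⁻¹ ^ n = (2 : ℝ≥0∞) ^ (-(n : ℝ)) := by
    rw [ENNReal.rpow_neg, ENNReal.rpow_natCast, ENNReal.inv_pow]
  rw [heq]
  exact ENNReal.rpow_le_rpow_of_exponent_le (by norm_num) (by linarith)

lemma bad_bound (d : ℕ) (μ : Measure (ℤ → Fin d → Bool))
    (γ : ℝ) (hγ0 : 0 < γ) (hγ1 : γ < 1)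
    (hcyl : ∀ (J : Finset ℤ) (i : Fin d) (c : Bool),
      μ {ω | ∀ j ∈ J, ω j i = c} ≤ (2 : ℝ≥0∞)⁻¹ ^ J.card)
    (h : IsUniformProduct d μ) (r : ℕ) (k : ℤ) :
    μ {ω | isBad d γ r ω k} ≤
      (d : ℝ≥0∞) * (2 : ℝ≥0∞) ^ (-(γ * r) : ℝ) * (1 - (2 : ℝ≥0∞) ^ (-γ : ℝ))⁻¹ := by
  set A : ℕ × Fin d × Bool → Set (ℤ → Fin d → Bool) := fun p =>
    {ω | ∀ j ∈ Finset.Icc (k + ⌊(1 - γ) * ((r + p.1 : ℕ) : ℝ)⌋) (k + ((r + p.1 : ℕ) : ℤ)),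
      ω j p.2.1 = p.2.2} with hA
  have hsum : ∀ p : ℕ × Fin d × Bool,
      μ (A p) ≤ (2 : ℝ≥0∞) ^ (-(γ * ((r + p.1 : ℕ) : ℝ) + 1) : ℝ) := fun p =>
    piece_bound d μ h γ hγ0 hγ1 hcyl (r + p.1) k p.2.1 p.2.2
  have h2z : (2 : ℝ≥0∞) ≠ 0 := by norm_num
  have h2t : (2 : ℝ≥0∞) ≠ ⊤ := by norm_num
  calc μ {ω | isBad d γ r ω k} ≤ μ (⋃ p, A p) := measure_mono (bad_subset d γ hγ0 r k)
    _ ≤ ∑' p : ℕ × Fin d × Bool, μ (A p) := measure_iUnion_le A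
    _ ≤ ∑' p : ℕ × Fin d × Bool, (2 : ℝ≥0∞) ^ (-(γ * ((r + p.1 : ℕ) : ℝ) + 1) : ℝ) :=
        ENNReal.tsum_le_tsum hsum
    _ = ∑' t : ℕ, ∑' _q : Fin d × Bool, (2 : ℝ≥0∞) ^ (-(γ * ((r + t : ℕ) : ℝ) + 1) : ℝ) :=
        ENNReal.tsum_prod
          (f := fun (t : ℕ) (_ : Fin d × Bool) =>
            (2 : ℝ≥0∞) ^ (-(γ * ((r + t : ℕ) : ℝ) + 1) : ℝ))
    _ = ∑' t : ℕ, ((d : ℝ≥0∞) * 2) * (2 : ℝ≥0∞) ^ (-(γ * ((r + t : ℕ) : ℝ) + 1) : ℝ) :=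
        tsum_congr fun t => by
          rw [tsum_fintype, Finset.sum_const, Finset.card_univ, nsmul_eq_mul]
          congr 1
          simp [Fintype.card_prod, mul_comm]
    _ = ((d : ℝ≥0∞) * 2) * ∑' t : ℕ, (2 : ℝ≥0∞) ^ (-(γ * ((r + t : ℕ) : ℝ) + 1) : ℝ) :=
        ENNReal.tsum_mul_left
    _ = ((d : ℝ≥0∞) * 2) * ∑' t : ℕ,
          ((2 : ℝ≥0∞) ^ (-(γ * r) - 1 : ℝ)) * ((2 : ℝ≥0∞) ^ (-γ : ℝ)) ^ t := by
        refine congrArg _ (tsum_congr fun t => ?_)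
        rw [← ENNReal.rpow_natCast ((2 : ℝ≥0∞) ^ (-γ : ℝ)) t, ← ENNReal.rpow_mul,
          ← ENNReal.rpow_add _ _ h2z h2t]
        congr 1; push_cast; ring
    _ = ((d : ℝ≥0∞) * 2) * (((2 : ℝ≥0∞) ^ (-(γ * r) - 1 : ℝ)) *
          (1 - (2 : ℝ≥0∞) ^ (-γ : ℝ))⁻¹) := by
        rw [ENNReal.tsum_mul_left, ENNReal.tsum_geometric]
    _ = (d : ℝ≥0∞) * (2 : ℝ≥0∞) ^ (-(γ * r) : ℝ) * (1 - (2 : ℝ≥0∞) ^ (-γ : ℝ))⁻¹ := by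
        have h21 : (2 : ℝ≥0∞) ^ (-(γ * r) - 1 : ℝ) =
            (2 : ℝ≥0∞) ^ (-(γ * r) : ℝ) * 2⁻¹ := by
          rw [show (-(γ * r) - 1 : ℝ) = -(γ * r) + (-1) from by ring,
            ENNReal.rpow_add _ _ h2z h2t, ENNReal.rpow_neg_one]
        rw [h21, show ((d : ℝ≥0∞) * 2) * ((2 : ℝ≥0∞) ^ (-(γ * r) : ℝ) * 2⁻¹ *
            (1 - (2 : ℝ≥0∞) ^ (-γ : ℝ))⁻¹) =
          ((d : ℝ≥0∞) * (2 : ℝ≥0∞) ^ (-(γ * r) : ℝ) * (1 - (2 : ℝ≥0∞) ^ (-γ : ℝ))⁻¹) *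
            (2 * 2⁻¹) from by ring,
          ENNReal.mul_inv_cancel h2z h2t, mul_one]

lemma two_rpow_neg_le (γ : ℝ) (h0 : 0 < γ) (h1 : γ ≤ 1) :
    (2 : ℝ) ^ (-γ) ≤ 1 - γ / 4 := by
  have hL1 : 0.6931471803 < Real.log 2 := Real.log_two_gt_d9
  have hL2 : Real.log 2 < 0.6931471808 := Real.log_two_lt_d9
  have hexp : 1 + γ * Real.log 2 ≤ Real.exp (γ * Real.log 2) := by
    have := Real.add_one_le_exp (γ * Real.log 2); linarith
  have hpos' : 0 < 1 + γ * Real.log 2 := by nlinarith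
  have h2 : (2 : ℝ) ^ (-γ) = (Real.exp (γ * Real.log 2))⁻¹ := by
    rw [Real.rpow_def_of_pos (by norm_num : (0:ℝ) < 2), ← Real.exp_neg]
    ring_nf
  rw [h2]
  calc (Real.exp (γ * Real.log 2))⁻¹ ≤ (1 + γ * Real.log 2)⁻¹ := by
        apply inv_anti₀ hpos' hexp
    _ ≤ 1 - γ / 4 := by
        rw [inv_eq_one_div, div_le_iff₀ hpos']
        have hq : γ * γ * Real.log 2 ≤ γ * Real.log 2 :=
          mul_le_mul_of_nonneg_right (mul_le_of_le_one_right h0.le h1)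
            (by linarith : (0:ℝ) ≤ Real.log 2)
        have hq2 : γ * 0.6931471803 ≤ γ * Real.log 2 :=
          mul_le_mul_of_nonneg_left hL1.le h0.le
        nlinarith

lemma bad_measurable (d : ℕ) (γ : ℝ) (r : ℕ) (k : ℤ) :
    MeasurableSet {ω : ℤ → Fin d → Bool | isBad d γ r ω k} := by
  have heq : {ω : ℤ → Fin d → Bool | isBad d γ r ω k} =
      ⋃ (s : ℕ) (_ : r ≤ s) (i : Fin d),
        ⋂ (j₁ ∈ Set.Icc (k + ⌊(1 - γ) * (s : ℝ)⌋) (k + (s : ℤ)))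
          (j₂ ∈ Set.Icc (k + ⌊(1 - γ) * (s : ℝ)⌋) (k + (s : ℤ))),
            {ω : ℤ → Fin d → Bool | ω j₁ i = ω j₂ i} := by
    ext ω
    simp only [Set.mem_setOf_eq, isBad, Set.mem_iUnion, Set.mem_iInter]
    constructor
    · rintro ⟨s, hrs, i, hag⟩
      exact ⟨s, hrs, i, fun j₁ h₁ j₂ h₂ => hag j₁ h₁ j₂ h₂⟩
    · rintro ⟨s, hrs, i, hag⟩
      exact ⟨s, hrs, i, fun j₁ h₁ j₂ h₂ => hag j₁ h₁ j₂ h₂⟩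
  rw [heq]
  refine MeasurableSet.iUnion fun s => MeasurableSet.iUnion fun _ =>
    MeasurableSet.iUnion fun i => ?_
  refine MeasurableSet.biInter (Set.to_countable _) fun j₁ _ => ?_
  refine MeasurableSet.biInter (Set.to_countable _) fun j₂ _ => ?_
  exact measurableSet_eq_fun
    ((measurable_pi_apply i).comp (measurable_pi_apply j₁))
    ((measurable_pi_apply i).comp (measurable_pi_apply j₂))

/-- For `0 < γ < 1` and `r > γ⁻¹`, a fixed dyadic cube of the
random grid is `r`-good with probability at least `1 - C_d γ⁻¹ 2^{-γ r}`. -/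
theorem prob_good (d : ℕ) :
    ∃ C : ℝ, 0 < C ∧
      ∀ (γ : ℝ) (r : ℕ), 0 < γ → γ < 1 → γ⁻¹ < (r : ℝ) →
        ∀ (μ : Measure (ℤ → Fin d → Bool)) [IsProbabilityMeasure μ],
          IsUniformProduct d μ →
          ∀ k : ℤ,
            1 - ENNReal.ofReal (C * γ⁻¹ * (2 : ℝ) ^ (-(γ * (r : ℝ)))) ≤
              μ {ω | ¬ isBad d γ r ω k} := by
  refine ⟨4 * d + 1, by positivity, ?_⟩
  intro γ r hγ0 hγ1 hγr μ _ hμ k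
  have hmeas := bad_measurable d γ r k
  have hcyl := cyl_bound d μ hμ
  have hbb := bad_bound d μ γ hγ0 hγ1 hcyl hμ r k
  have h2o : (2 : ℝ≥0∞) = ENNReal.ofReal 2 := by
    rw [ENNReal.ofReal_ofNat]
  have hx : (2 : ℝ≥0∞) ^ (-γ : ℝ) = ENNReal.ofReal ((2 : ℝ) ^ (-γ)) := by
    rw [h2o, ENNReal.ofReal_rpow_of_pos (by norm_num : (0:ℝ) < 2)]
  have hx2 : (2 : ℝ≥0∞) ^ (-(γ * r) : ℝ) = ENNReal.ofReal ((2 : ℝ) ^ (-(γ * r))) := by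
    rw [h2o, ENNReal.ofReal_rpow_of_pos (by norm_num : (0:ℝ) < 2)]
  have hrpos : (0:ℝ) < (2 : ℝ) ^ (-(γ * r)) := Real.rpow_pos_of_pos (by norm_num) _
  have hineq1 : (1 - (2 : ℝ≥0∞) ^ (-γ : ℝ))⁻¹ ≤ ENNReal.ofReal (4 / γ) := by
    have h24 : ENNReal.ofReal (γ / 4) ≤ 1 - (2 : ℝ≥0∞) ^ (-γ : ℝ) := by
      rw [hx, ← ENNReal.ofReal_one,
        ← ENNReal.ofReal_sub _ (le_of_lt (Real.rpow_pos_of_pos two_pos _))]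
      exact ENNReal.ofReal_le_ofReal
        (by have := two_rpow_neg_le γ hγ0 hγ1.le; linarith)
    calc (1 - (2 : ℝ≥0∞) ^ (-γ : ℝ))⁻¹ ≤ (ENNReal.ofReal (γ / 4))⁻¹ := by gcongr
      _ = ENNReal.ofReal (4 / γ) := by
          rw [← ENNReal.ofReal_inv_of_pos (by positivity)]
          congr 1
          field_simp
  have hbound : μ {ω | isBad d γ r ω k} ≤
      ENNReal.ofReal ((4 * d + 1) * γ⁻¹ * (2 : ℝ) ^ (-(γ * r))) := by
    refine hbb.trans ?_
    have hdo : (d : ℝ≥0∞) * (2 : ℝ≥0∞) ^ (-(γ * r) : ℝ) =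
        ENNReal.ofReal (d * (2 : ℝ) ^ (-(γ * r))) := by
      rw [ENNReal.ofReal_mul (by positivity), ENNReal.ofReal_natCast, hx2]
    calc (d : ℝ≥0∞) * (2 : ℝ≥0∞) ^ (-(γ * r) : ℝ) * (1 - (2 : ℝ≥0∞) ^ (-γ : ℝ))⁻¹
        ≤ ENNReal.ofReal (d * (2 : ℝ) ^ (-(γ * r))) * ENNReal.ofReal (4 / γ) := by
          rw [hdo]; gcongr
      _ = ENNReal.ofReal (d * (2 : ℝ) ^ (-(γ * r)) * (4 / γ)) :=
          (ENNReal.ofReal_mul (by positivity)).symm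
      _ ≤ ENNReal.ofReal ((4 * d + 1) * γ⁻¹ * (2 : ℝ) ^ (-(γ * r))) := by
          apply ENNReal.ofReal_le_ofReal
          rw [div_eq_mul_inv]
          have h1 : (0:ℝ) < γ⁻¹ := by positivity
          nlinarith [mul_pos h1 hrpos, Nat.cast_nonneg (α := ℝ) d]
  have hcompl : {ω : ℤ → Fin d → Bool | ¬ isBad d γ r ω k} =
      {ω : ℤ → Fin d → Bool | isBad d γ r ω k}ᶜ := rfl
  rw [hcompl, measure_compl hmeas (measure_ne_top μ _), measure_univ]
  exact tsub_le_tsub_left hbound 1
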